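/- Let R ⊆ S be a ring extension, σ ∈ Aut(S) restricting to an automorphism of R, and M a σ-stable right R-submodule of S (σ(M) ⊆ M). Consider the skew polynomial rings S[z;σ] ⊇ R[z;σ] and the right R[z;σ]-submodule M[z] = ⊕_{n≥0} M z^n of S[z;σ]. Then the map ψ sending f z^k ∈ Hom_R(M,R)[z] to the map m z^i ↦ σ^k(f(m)) z^{k+i} is a well-defined injective additive map from Hom_R(M,R)[z] to Hom_{R[z;σ]}(M[z], R[z;σ]), and each ψ_{fz^k} is right R[z;σ]-linear. -/

import Mathlib

/-!
STATEMENT 8: Let `R ⊆ S` be a ring extension, `σ ∈ Aut(S)` restricting to an automorphism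
of `R`, `M` a `σ`-stable right `R`-submodule of `S`, and `M[z] ⊆ S[z;σ]` the corresponding
right `R[z;σ]`-submodule.  The map `ψ` sending `f z^k ∈ Hom_R(M,R)[z]` to
`[m zⁱ ↦ σ^k(f(m)) z^{k+i}]` is a well-defined injective additive map
`Hom_R(M,R)[z] → Hom_{R[z;σ]}(M[z], R[z;σ])`, and each `ψ_{f z^k}` is right
`R[z;σ]`-linear.

Encoding: `S[z;σ]` is a ring `T` with `ι : S → T`, `z : T`, the skew relation, and unique
representation of elements by their coefficient functions `coeff : T → (ℕ →₀ S)`.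
An element `Σ_k f_k z^k` of `Hom_R(M,R)[z]` is a finitely supported family
`f : ℕ → S → S` (support in a finset `D`) of maps which on `M` are additive, `R`-valued
and right `R`-linear; its image `ψ(Σ f_k z^k)` is the map
`Ψ : t ↦ Σ_{k ∈ D} Σ_i ι(σ^k(f_k(coeff t i))) z^{k+i}` on
`M[z] = {t | ∀ i, coeff t i ∈ M}`.  Injectivity (of the additive map `ψ`) is stated as
triviality of its kernel, with maps in `Hom_R(M,R)` compared on `M`.
-/

theorem stmt8 {S T : Type*} [Ring S] [Ring T] (R : Subring S) (σ : RingAut S)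
    (hσR : ∀ s : S, s ∈ R ↔ σ s ∈ R)
    (M : AddSubgroup S)
    (hMR : ∀ m ∈ M, ∀ r ∈ R, m * r ∈ M)
    (hMσ : ∀ m ∈ M, σ m ∈ M)
    (ι : S →+* T) (z : T)
    (hcomm : ∀ s : S, z * ι s = ι (σ s) * z)
    (coeff : T → (ℕ →₀ S))
    (hco1 : ∀ t : T, t = (coeff t).sum fun i s => ι s * z ^ i)
    (hco2 : ∀ c : ℕ →₀ S, coeff (c.sum fun i s => ι s * z ^ i) = c)
    -- an element `Σ_{k ∈ D} f_k z^k` of `Hom_R(M,R)[z]`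
    (D : Finset ℕ) (f : ℕ → S → S)
    (hf0 : ∀ k ∉ D, ∀ m ∈ M, f k m = 0)
    (hfadd : ∀ k : ℕ, ∀ m ∈ M, ∀ m' ∈ M, f k (m + m') = f k m + f k m')
    (hfR : ∀ k : ℕ, ∀ m ∈ M, f k m ∈ R)
    (hflin : ∀ k : ℕ, ∀ m ∈ M, ∀ r ∈ R, f k (m * r) = f k m * r)
    -- `Ψ = ψ(Σ_{k ∈ D} f_k z^k)`
    (Ψ : T → T)
    (hΨ : ∀ t : T,
      Ψ t = ∑ k ∈ D, (coeff t).sum fun i m => ι ((σ ^ k) (f k m)) * z ^ (k + i)) :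
    -- `Ψ` is additive on `M[z]`
    (∀ t t' : T, (∀ i, coeff t i ∈ M) → (∀ i, coeff t' i ∈ M) →
      Ψ (t + t') = Ψ t + Ψ t') ∧
    -- `Ψ` takes values in `R[z;σ]`
    (∀ t : T, (∀ i, coeff t i ∈ M) → ∀ j : ℕ, coeff (Ψ t) j ∈ R) ∧
    -- `Ψ` is right `R[z;σ]`-linear
    (∀ t : T, (∀ i, coeff t i ∈ M) → ∀ a : T, (∀ i, coeff a i ∈ R) →
      Ψ (t * a) = Ψ t * a) ∧
    -- `ψ` is injective: if `Ψ` vanishes on `M[z]` then all `f_k` vanish on `M`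
    ((∀ t : T, (∀ i, coeff t i ∈ M) → Ψ t = 0) → ∀ k : ℕ, ∀ m ∈ M, f k m = 0) := by
  classical
  -- `f k 0 = 0`
  have hf00 : ∀ k, f k 0 = 0 := by
    intro k
    have h : f k 0 + 0 = f k 0 + f k 0 := by
      simpa using hfadd k 0 M.zero_mem 0 M.zero_mem
    exact (add_left_cancel h).symm
  -- coeff is additive, zero, sums, singles
  have hcz : coeff 0 = 0 := by simpa using hco2 0
  have hca : ∀ t t' : T, coeff (t + t') = coeff t + coeff t' := by
    intro t t'
    have h : t + t' = (coeff t + coeff t').sum fun i s => ι s * z ^ i := by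
      rw [Finsupp.sum_add_index' (by simp) (by intro i s s'; rw [map_add, add_mul])]
      exact congrArg₂ (· + ·) (hco1 t) (hco1 t')
    rw [h, hco2]
  have hcs : ∀ (s : Finset ℕ) (g : ℕ → T),
      coeff (∑ n ∈ s, g n) = ∑ n ∈ s, coeff (g n) := by
    intro s g
    induction s using Finset.induction_on with
    | empty => simpa using hcz
    | insert _ _ h ih => rw [Finset.sum_insert h, Finset.sum_insert h, hca, ih]
  have hcsingle : ∀ (n : ℕ) (s : S), coeff (ι s * z ^ n) = Finsupp.single n s := by
    intro n s
    have h := hco2 (Finsupp.single n s)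
    rwa [Finsupp.sum_single_index (by simp)] at h
  -- σ^k preserves R
  have hσk : ∀ (k : ℕ) (r : S), r ∈ R → (σ ^ k) r ∈ R := by
    intro k
    induction k with
    | zero => intro r hr; simpa using hr
    | succ k ih =>
        intro r hr
        rw [pow_succ]
        exact ih _ ((hσR r).mp hr)
  -- skew relation for powers
  have hzpow : ∀ (i : ℕ) (s : S), z ^ i * ι s = ι ((σ ^ i) s) * z ^ i := by
    intro i
    induction i with
    | zero => intro s; simp
    | succ i ih =>
        intro s
        rw [pow_succ, mul_assoc, hcomm, ← mul_assoc, ih, mul_assoc, ← pow_succ]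
        rw [pow_succ σ i]
        rfl
  -- monomial multiplication
  have hmono : ∀ (u r : S) (p n : ℕ),
      (ι u * z ^ p) * (ι r * z ^ n) = ι (u * (σ ^ p) r) * z ^ (p + n) := by
    intro u r p n
    have h1 : (ι u * z ^ p) * (ι r * z ^ n) = ι u * (z ^ p * ι r) * z ^ n := by
      simp [mul_assoc]
    rw [h1, hzpow, ← mul_assoc, ← map_mul, mul_assoc, ← pow_add]
  -- Ψ as a sum over any superset of the support
  have hΨE : ∀ (t : T) (E : Finset ℕ), (coeff t).support ⊆ E →
      Ψ t = ∑ k ∈ D, ∑ i ∈ E, ι ((σ ^ k) (f k (coeff t i))) * z ^ (k + i) := by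
    intro t E hE
    rw [hΨ]
    exact Finset.sum_congr rfl fun k _ =>
      Finsupp.sum_of_support_subset _ hE _ (fun i _ => by simp [hf00])
  have hΨ0 : Ψ 0 = 0 := by
    rw [hΨ]; simp [hcz]
  -- PART 1 : additivity
  have part1 : ∀ t t' : T, (∀ i, coeff t i ∈ M) → (∀ i, coeff t' i ∈ M) →
      Ψ (t + t') = Ψ t + Ψ t' := by
    intro t t' ht ht'
    have hE : (coeff (t + t')).support ⊆ (coeff t).support ∪ (coeff t').support := by
      rw [hca]; exact Finsupp.support_add
    rw [hΨE (t + t') _ hE, hΨE t _ Finset.subset_union_left,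
      hΨE t' _ Finset.subset_union_right, ← Finset.sum_add_distrib]
    refine Finset.sum_congr rfl fun k _ => ?_
    rw [← Finset.sum_add_distrib]
    refine Finset.sum_congr rfl fun i _ => ?_
    have hci : coeff (t + t') i = coeff t i + coeff t' i := by rw [hca]; rfl
    rw [hci, hfadd k _ (ht i) _ (ht' i), map_add, map_add, add_mul]
  refine ⟨part1, ?_, ?_, ?_⟩
  -- PART 2 : values in R[z;σ]
  · intro t ht j
    have hcΨ : coeff (Ψ t) = ∑ k ∈ D, ∑ i ∈ (coeff t).support,
        Finsupp.single (k + i) ((σ ^ k) (f k (coeff t i))) := by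
      rw [hΨE t _ subset_rfl, hcs]
      refine Finset.sum_congr rfl fun k _ => ?_
      rw [hcs]
      exact Finset.sum_congr rfl fun i _ => hcsingle _ _
    rw [hcΨ, Finsupp.finset_sum_apply]
    refine sum_mem fun k _ => ?_
    rw [Finsupp.finset_sum_apply]
    refine sum_mem fun i _ => ?_
    rw [Finsupp.single_apply]
    split
    · exact hσk k _ (hfR k _ (ht i))
    · exact R.zero_mem
  -- PART 3 : right linearity
  · intro t ht a ha
    -- product with a monomial
    have hmul : ∀ (r : S) (n : ℕ), t * (ι r * z ^ n) =
        ∑ i ∈ (coeff t).support, ι (coeff t i * (σ ^ i) r) * z ^ (i + n) := by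
      intro r n
      conv_lhs => rw [hco1 t]
      rw [Finsupp.sum, Finset.sum_mul]
      exact Finset.sum_congr rfl fun i _ => hmono _ _ _ _
    have hcmul : ∀ (r : S) (n : ℕ), coeff (t * (ι r * z ^ n)) =
        ∑ i ∈ (coeff t).support, Finsupp.single (i + n) (coeff t i * (σ ^ i) r) := by
      intro r n
      rw [hmul, hcs]
      exact Finset.sum_congr rfl fun i _ => hcsingle _ _
    -- membership of the monomial product in M[z]
    have hmem : ∀ (r : S), r ∈ R → ∀ (n : ℕ) (j : ℕ),
        coeff (t * (ι r * z ^ n)) j ∈ M := by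
      intro r hr n j
      rw [hcmul, Finsupp.finset_sum_apply]
      refine sum_mem fun i _ => ?_
      rw [Finsupp.single_apply]
      split
      · exact hMR _ (ht i) _ (hσk i r hr)
      · exact M.zero_mem
    -- Ψ of the monomial product
    have hΨmul : ∀ (r : S), r ∈ R → ∀ (n : ℕ),
        Ψ (t * (ι r * z ^ n)) = Ψ t * (ι r * z ^ n) := by
      intro r hr n
      set E := (coeff t).support with hEdef
      have hinj : Set.InjOn (· + n) (E : Set ℕ) := (add_left_injective n).injOn
      have hsupp : (coeff (t * (ι r * z ^ n))).support ⊆ E.image (· + n) := by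
        intro j hj
        rw [Finsupp.mem_support_iff] at hj
        by_contra hjE
        apply hj
        rw [hcmul, Finsupp.finset_sum_apply]
        refine Finset.sum_eq_zero fun i hi => ?_
        rw [Finsupp.single_apply, if_neg]
        intro h
        exact hjE (Finset.mem_image.mpr ⟨i, hi, h⟩)
      have happly : ∀ i ∈ E, coeff (t * (ι r * z ^ n)) (i + n)
          = coeff t i * (σ ^ i) r := by
        intro i hi
        rw [hcmul, Finsupp.finset_sum_apply]
        rw [Finset.sum_eq_single i (fun b hb hbne => by
          rw [Finsupp.single_apply, if_neg (by omega)]) (fun h => absurd hi h)]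
        simp
      rw [hΨE _ _ hsupp, hΨE t _ subset_rfl, Finset.sum_mul]
      refine Finset.sum_congr rfl fun k _ => ?_
      rw [Finset.sum_image hinj, Finset.sum_mul]
      refine Finset.sum_congr rfl fun i hi => ?_
      have hσki : (σ ^ k) ((σ ^ i) r) = (σ ^ (k + i)) r := by
        rw [pow_add]; rfl
      rw [happly i hi, hflin k _ (ht i) _ (hσk i r hr), map_mul, hmono, hσki, add_assoc]
    -- now the general case by decomposition of `a`
    have hsum : ∀ (s : Finset ℕ),
        (∀ j, coeff (∑ n ∈ s, t * (ι (coeff a n) * z ^ n)) j ∈ M) ∧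
        Ψ (∑ n ∈ s, t * (ι (coeff a n) * z ^ n)) =
          ∑ n ∈ s, Ψ t * (ι (coeff a n) * z ^ n) := by
      intro s
      induction s using Finset.induction_on with
      | empty => exact ⟨fun j => by rw [Finset.sum_empty, hcz]; exact M.zero_mem, by simpa using hΨ0⟩
      | insert _ _ hns ih =>
          rename_i n s'
          constructor
          · intro j
            rw [Finset.sum_insert hns, hca]
            exact M.add_mem (hmem _ (ha n) n j) (ih.1 j)
          · rw [Finset.sum_insert hns, Finset.sum_insert hns,
              part1 _ _ (fun j => hmem _ (ha n) n j) ih.1, ih.2,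
              hΨmul _ (ha n) n]
    have hadef : a = ∑ n ∈ (coeff a).support, ι (coeff a n) * z ^ n := hco1 a
    calc Ψ (t * a) = Ψ (∑ n ∈ (coeff a).support, t * (ι (coeff a n) * z ^ n)) := by
          rw [← Finset.mul_sum, ← hadef]
      _ = ∑ n ∈ (coeff a).support, Ψ t * (ι (coeff a n) * z ^ n) := (hsum _).2
      _ = Ψ t * a := by rw [← Finset.mul_sum, ← hadef]
  -- PART 4 : injectivity
  · intro h0 k m hm
    by_cases hk : k ∈ D
    · have htM : ∀ i, coeff (ι m * z ^ 0) i ∈ M := by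
        intro i
        rw [hcsingle, Finsupp.single_apply]
        split
        · exact hm
        · exact M.zero_mem
      have h1 := h0 (ι m * z ^ 0) htM
      rw [hΨ, hcsingle] at h1
      have h2 : ∑ k' ∈ D, ι ((σ ^ k') (f k' m)) * z ^ (k' + 0) = 0 := by
        rw [← h1]
        exact Finset.sum_congr rfl fun k' _ =>
          (Finsupp.sum_single_index
            (h := fun i m' => ι ((σ ^ k') (f k' m')) * z ^ (k' + i))
            (by simp [hf00])).symm
      have h3 : (∑ k' ∈ D, Finsupp.single (k' + 0) ((σ ^ k') (f k' m))) = 0 := by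
        rw [← hcz, ← h2, hcs]
        exact Finset.sum_congr rfl fun k' _ => (hcsingle _ _).symm
      have h4 := DFunLike.congr_fun h3 k
      rw [Finsupp.finset_sum_apply,
        Finset.sum_eq_single k (fun b _ hb => by
          rw [Finsupp.single_apply, if_neg (by omega)]) (fun h => absurd hk h)] at h4
      simp only [Finsupp.single_apply, if_pos rfl, Finsupp.zero_apply] at h4
      exact (σ ^ k).injective (by simpa using h4)
    · exact hf0 k hk m hm
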